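/- Let V̂ ∈ ℝ^{(n²+1)×((n−1)²+1)} be the block matrix with V̂ = [[1, 0],[e_{n²}/n, V_e ⊗ V_e]], where V_e = [I_{n−1}; −e_{n−1}^T] ∈ ℝ^{n×(n−1)}. Let K = [−e_{n²}^T; H^T][−e_{n²}, H] with H = [e^T ⊗ I_n; I_n ⊗ e^T]. Then the range (column space) of V̂ equals the null space of K, i.e., range(V̂) = null(K). -/

import Mathlib

open Matrix Kronecker

private def ve (m : ℕ) (i : Fin (m+1)) (k : Fin m) : ℝ :=
  if (i:ℕ) = (k:ℕ) then 1 else if (i:ℕ) = m then -1 else 0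

private lemma ve_castSucc (m : ℕ) (i : Fin m) (k : Fin m) :
    ve m i.castSucc k = if i = k then 1 else 0 := by
  unfold ve
  simp only [Fin.coe_castSucc, Fin.val_eq_val]
  rw [if_neg (Nat.ne_of_lt i.isLt)]

private lemma ve_last (m : ℕ) (k : Fin m) : ve m (Fin.last m) k = -1 := by
  unfold ve
  simp only [Fin.val_last]
  rw [if_neg (Nat.ne_of_lt' k.isLt)]; simp

private lemma aux_col (m : ℕ) (k : Fin m) : ∑ i : Fin (m+1), ve m i k = 0 := by
  rw [Fin.sum_univ_castSucc]
  simp [ve_castSucc, ve_last, Finset.sum_ite_eq']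

private lemma aux_L1 (m : ℕ) (j : Fin (m+1)) (g : Fin (m+1) → ℝ) (hg : ∑ i, g i = 0) :
    ∑ l : Fin m, ve m j l * g l.castSucc = g j := by
  induction j using Fin.lastCases with
  | last =>
    simp only [ve_last, neg_one_mul, Finset.sum_neg_distrib]
    rw [Fin.sum_univ_castSucc] at hg
    linarith
  | cast j' =>
    simp [ve_castSucc, ite_mul, Finset.sum_ite_eq']

theorem range_Vhat_eq_null_K (n : ℕ) (hn : 1 ≤ n)
    (Ve : Matrix (Fin n) (Fin (n - 1)) ℝ)
    (hVe : Ve = Matrix.of fun (i : Fin n) (j : Fin (n - 1)) =>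
        if (i : ℕ) = (j : ℕ) then (1 : ℝ) else if (i : ℕ) = n - 1 then -1 else 0)
    (Vhat : Matrix (Unit ⊕ Fin n × Fin n) (Unit ⊕ Fin (n - 1) × Fin (n - 1)) ℝ)
    (hVhat : Vhat = Matrix.fromBlocks 1 0
        (Matrix.of fun _ _ => (1 : ℝ) / n) (Ve ⊗ₖ Ve))
    (H : Matrix (Fin n ⊕ Fin n) (Fin n × Fin n) ℝ)
    (hH : H = Matrix.of fun r : Fin n ⊕ Fin n => fun p : Fin n × Fin n =>
        Sum.elim (fun i => if p.2 = i then (1 : ℝ) else 0)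
          (fun i => if p.1 = i then (1 : ℝ) else 0) r)
    (M : Matrix (Fin n ⊕ Fin n) (Unit ⊕ Fin n × Fin n) ℝ)
    (hM : M = Matrix.of fun r c =>
        Sum.elim (fun _ : Unit => (-1 : ℝ)) (fun p : Fin n × Fin n => H r p) c) :
    LinearMap.range Vhat.mulVecLin = LinearMap.ker (Mᵀ * M).mulVecLin := by
  obtain ⟨m, rfl⟩ : ∃ m, n = m + 1 := ⟨n - 1, (Nat.succ_pred_eq_of_pos hn).symm⟩
  have hm : (((m:ℝ) + 1)) ≠ 0 := by positivity
  have hVe' : Ve = Matrix.of fun i k => ve m i k := by rw [hVe]; rfl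
  -- entries of V̂ *ᵥ y
  have hV1 : ∀ y : (Unit ⊕ Fin (m+1-1) × Fin (m+1-1)) → ℝ,
      (Vhat *ᵥ y) (Sum.inl ()) = y (Sum.inl ()) := by
    intro y
    rw [hVhat]
    simp [Matrix.mulVec, dotProduct, Fintype.sum_sum_type]
  have hV2 : ∀ (y : (Unit ⊕ Fin (m+1-1) × Fin (m+1-1)) → ℝ) (i j : Fin (m+1)),
      (Vhat *ᵥ y) (Sum.inr (i, j))
      = y (Sum.inl ()) / ((m:ℝ)+1)
        + ∑ k : Fin m, ∑ l : Fin m, ve m i k * ve m j l * y (Sum.inr (k, l)) := by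
    intro y i j
    rw [hVhat, hVe']
    simp [Matrix.mulVec, dotProduct, Fintype.sum_sum_type, Fintype.sum_prod_type,
      div_eq_mul_inv, mul_comm]
  -- entries of M *ᵥ z
  have hMapp : ∀ (z : (Unit ⊕ Fin (m+1) × Fin (m+1)) → ℝ) (r),
      (M *ᵥ z) r = Sum.elim
        (fun i => -z (Sum.inl ()) + ∑ a, z (Sum.inr (a, i)))
        (fun i => -z (Sum.inl ()) + ∑ b, z (Sum.inr (i, b))) r := by
    intro z r
    cases r with
    | inl i =>
      simp [hM, hH, Matrix.mulVec, dotProduct, Fintype.sum_sum_type,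
        Fintype.sum_prod_type, ite_mul, Finset.sum_ite_eq', Finset.sum_comm]
    | inr i =>
      simp only [hM, hH, Matrix.mulVec, dotProduct, Fintype.sum_sum_type,
        Fintype.sum_prod_type, Matrix.of_apply, Sum.elim_inl, Sum.elim_inr,
        ite_mul, one_mul, zero_mul, neg_one_mul, Fintype.sum_unique]
      rw [Finset.sum_eq_single_of_mem i (Finset.mem_univ i)]
      · simp
      · intro b _ hb; simp [hb]
  rw [Matrix.ker_mulVecLin_transpose_mul_self]
  ext x
  simp only [LinearMap.mem_range, LinearMap.mem_ker, Matrix.mulVecLin_apply]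
  constructor
  · rintro ⟨y, rfl⟩
    funext r
    rw [hMapp]
    cases r with
    | inl i =>
      have k1 : ∑ a : Fin (m+1), ∑ k : Fin m, ∑ l : Fin m,
          ve m a k * ve m i l * y (Sum.inr (k, l)) = 0 := by
        rw [Finset.sum_comm]
        refine Finset.sum_eq_zero fun k _ => ?_
        rw [Finset.sum_comm]
        refine Finset.sum_eq_zero fun l _ => ?_
        simp only [mul_assoc, ← Finset.sum_mul]
        rw [aux_col, zero_mul]
      simp only [Sum.elim_inl, hV1, hV2, Pi.zero_apply]
      rw [Finset.sum_add_distrib, k1, Finset.sum_const, Finset.card_univ,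
        Fintype.card_fin, nsmul_eq_mul]
      push_cast
      field_simp
      ring
    | inr i =>
      have k2 : ∑ b : Fin (m+1), ∑ k : Fin m, ∑ l : Fin m,
          ve m i k * ve m b l * y (Sum.inr (k, l)) = 0 := by
        rw [Finset.sum_comm]
        refine Finset.sum_eq_zero fun k _ => ?_
        rw [Finset.sum_comm]
        refine Finset.sum_eq_zero fun l _ => ?_
        have : ∀ b : Fin (m+1), ve m i k * ve m b l * y (Sum.inr (k, l))
            = ve m b l * (ve m i k * y (Sum.inr (k, l))) := fun b => by ring
        rw [Finset.sum_congr rfl fun b _ => this b, ← Finset.sum_mul, aux_col, zero_mul]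
      simp only [Sum.elim_inr, hV1, hV2, Pi.zero_apply]
      rw [Finset.sum_add_distrib, k2, Finset.sum_const, Finset.card_univ,
        Fintype.card_fin, nsmul_eq_mul]
      push_cast
      field_simp
      ring
  · intro hx
    set t := x (Sum.inl ()) with ht
    have hcol : ∀ i, ∑ a, x (Sum.inr (a, i)) = t := by
      intro i
      have h := congrFun hx (Sum.inl i)
      rw [hMapp] at h
      simp only [Sum.elim_inl, Pi.zero_apply] at h
      linarith
    have hrow : ∀ i, ∑ b, x (Sum.inr (i, b)) = t := by
      intro i
      have h := congrFun hx (Sum.inr i)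
      rw [hMapp] at h
      simp only [Sum.elim_inr, Pi.zero_apply] at h
      linarith
    set Z : Fin (m+1) × Fin (m+1) → ℝ := fun p => x (Sum.inr p) - t / ((m:ℝ)+1)
      with hZ
    have hsum : ∑ _a : Fin (m+1), t / ((m:ℝ)+1) = t := by
      rw [Finset.sum_const, Finset.card_univ, Fintype.card_fin, nsmul_eq_mul]
      push_cast
      field_simp
    have hZcol : ∀ j, ∑ a, Z (a, j) = 0 := by
      intro j
      simp only [hZ, Finset.sum_sub_distrib, hcol, hsum, sub_self]
    have hZrow : ∀ i, ∑ b, Z (i, b) = 0 := by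
      intro i
      simp only [hZ, Finset.sum_sub_distrib, hrow, hsum, sub_self]
    refine ⟨Sum.elim (fun _ => t) (fun p => Z (p.1.castSucc, p.2.castSucc)), ?_⟩
    funext c
    cases c with
    | inl u => rw [hV1]; simp [ht]
    | inr p =>
      obtain ⟨i, j⟩ := p
      rw [hV2]
      simp only [Sum.elim_inl, Sum.elim_inr]
      have hinner : ∀ k : Fin m, ∑ l : Fin m,
          ve m i k * ve m j l * Z (k.castSucc, l.castSucc)
          = ve m i k * Z (k.castSucc, j) := by
        intro k
        simp only [mul_assoc, ← Finset.mul_sum]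
        congr 1
        exact aux_L1 m j (fun b => Z (k.castSucc, b)) (hZrow _)
      have houter : ∑ k : Fin m, ve m i k * Z (k.castSucc, j) = Z (i, j) :=
        aux_L1 m i (fun a => Z (a, j)) (hZcol j)
      rw [Finset.sum_congr rfl fun k _ => hinner k, houter]
      simp only [hZ]
      ring
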